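/- Let (Ω, P) be a probability space and let X : Ω → ℝ^d, Z : Ω → ℝ^m, ε : Ω → ℝ be random variables, W : Ω → ℝ taking values in {0,1} with P(W=1) = p, and g : ℝ^d → ℝ, h : ℝ^m → ℝ measurable. Assume Z and h(Z) are square-integrable, W is independent of the pair (X, Z), and ε is independent of (X, Z) with E[ε] = 0 and ε square-integrable. Let R = h(Z) − E[h(Z) | σ(X)] + τ(W − p) + ε, where E[· | σ(X)] denotes the conditional expectation with respect to the σ-algebra generated by X. Then for each coordinate j ∈ {1,…,m}, Cov(Z_j, R) = E[ E[Z_j·h(Z) | σ(X)] − E[Z_j | σ(X)]·E[h(Z) | σ(X)] ]. -/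

import Mathlib

open MeasureTheory ProbabilityTheory

lemma myIntMul {Ω : Type} [MeasurableSpace Ω] {P : Measure Ω} {f g : Ω → ℝ}
    (hf : MemLp f 2 P) (hg : MemLp g 2 P) : Integrable (fun ω => f ω * g ω) P := by
  have h := hg.smul (φ := f) hf (p := 2) (q := 2) (r := 1)
  rw [memLp_one_iff_integrable] at h
  exact h

lemma myCondexpL2 {Ω : Type} {m : MeasurableSpace Ω} [m0 : MeasurableSpace Ω]
    (hm : m ≤ m0) (P : Measure Ω) [IsProbabilityMeasure P]
    {f : Ω → ℝ} (hf : MemLp f 2 P) :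
    MemLp (P[f|m]) 2 P := by
  have hfi : Integrable f P := hf.integrable one_le_two
  set G : Lp ℝ 2 P := ((condExpL2 ℝ ℝ hm (hf.toLp f) : lpMeas ℝ ℝ m 2 P) : Lp ℝ 2 P) with hG
  have hae : (G : Ω → ℝ) =ᵐ[P] P[f|m] := by
    refine ae_eq_condExp_of_forall_setIntegral_eq hm hfi
      (fun s _ _ => ((Lp.memLp _).integrable one_le_two).integrableOn)
      (fun s hs hμs => ?_) ?_
    · rw [hG]
      rw [integral_condExpL2_eq (𝕜 := ℝ) hm (hf.toLp f) hs hμs.ne]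
      exact setIntegral_congr_ae (hm s hs) ((hf.coeFn_toLp).mono fun x hx _ => hx)
    · rw [hG]; exact lpMeas.aestronglyMeasurable _
  exact (Lp.memLp G).ae_eq hae

theorem stmt_8 {Ω : Type} [MeasurableSpace Ω]
    (P : Measure Ω) [IsProbabilityMeasure P]
    {d m : ℕ} (X : Ω → (Fin d → ℝ)) (Z : Ω → (Fin m → ℝ)) (eps W : Ω → ℝ)
    (hXm : Measurable X) (hZm : Measurable Z)
    (hepsm : Measurable eps) (hWm : Measurable W)
    (g : (Fin d → ℝ) → ℝ) (h : (Fin m → ℝ) → ℝ)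
    (hg : Measurable g) (hh : Measurable h)
    (τ p : ℝ)
    (hWval : ∀ ω, W ω = 0 ∨ W ω = 1)
    (hp : (P {ω | W ω = 1}).toReal = p)
    (hZ2 : ∀ j, MemLp (fun ω => Z ω j) 2 P)
    (hhZ2 : MemLp (fun ω => h (Z ω)) 2 P)
    (heps2 : MemLp eps 2 P)
    (hWXZ : IndepFun W (fun ω => (X ω, Z ω)) P)
    (hepsXZ : IndepFun eps (fun ω => (X ω, Z ω)) P)
    (heps0 : ∫ ω, eps ω ∂P = 0)
    (R : Ω → ℝ)
    (hR : ∀ ω, R ω = h (Z ω)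
      - (P[(fun ω' => h (Z ω')) | MeasurableSpace.comap X inferInstance]) ω
      + τ * (W ω - p) + eps ω) :
    ∀ j : Fin m,
      (∫ ω, Z ω j * R ω ∂P) - (∫ ω, Z ω j ∂P) * (∫ ω, R ω ∂P) =
        ∫ ω,
          ((P[(fun ω' => Z ω' j * h (Z ω')) |
              MeasurableSpace.comap X inferInstance]) ω -
            (P[(fun ω' => Z ω' j) | MeasurableSpace.comap X inferInstance]) ω *
            (P[(fun ω' => h (Z ω')) | MeasurableSpace.comap X inferInstance]) ω)
          ∂P := by
  intro j
  have hm : MeasurableSpace.comap X inferInstance ≤ (inferInstance : MeasurableSpace Ω) :=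
    hXm.comap_le
  have hZjm : Measurable fun ω => Z ω j := (measurable_pi_apply j).comp hZm
  have hhZm : Measurable fun ω => h (Z ω) := hh.comp hZm
  have hW2 : MemLp W 2 P := by
    refine (memLp_top_of_bound hWm.aestronglyMeasurable 1
      (Filter.Eventually.of_forall fun ω => ?_)).mono_exponent le_top
    rcases hWval ω with h' | h' <;> simp [h']
  have intZj : Integrable (fun ω => Z ω j) P := (hZ2 j).integrable one_le_two
  have inthZ : Integrable (fun ω => h (Z ω)) P := hhZ2.integrable one_le_two
  have intW : Integrable W P := hW2.integrable one_le_two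
  have inteps : Integrable eps P := heps2.integrable one_le_two
  set cE := (P[(fun ω' => h (Z ω')) | MeasurableSpace.comap X inferInstance]) with hcE
  set cZj := (P[(fun ω' => Z ω' j) | MeasurableSpace.comap X inferInstance]) with hcZj
  have hcE2 : MemLp cE 2 P := myCondexpL2 hm P hhZ2
  have hcZj2 : MemLp cZj 2 P := myCondexpL2 hm P (hZ2 j)
  have intcE : Integrable cE P := hcE.symm ▸ integrable_condExp
  have int1 : Integrable (fun ω => Z ω j * h (Z ω)) P := myIntMul (hZ2 j) hhZ2
  have int2 : Integrable (fun ω => Z ω j * cE ω) P := myIntMul (hZ2 j) hcE2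
  have int3 : Integrable (fun ω => Z ω j * W ω) P := myIntMul (hZ2 j) hW2
  have int4 : Integrable (fun ω => Z ω j * eps ω) P := myIntMul (hZ2 j) heps2
  have int5 : Integrable (fun ω => cZj ω * cE ω) P := myIntMul hcZj2 hcE2
  -- E[W] = p
  have hWp : ∫ ω, W ω ∂P = p := by
    have hWeq : W = (W ⁻¹' {1}).indicator (fun _ => (1 : ℝ)) := by
      funext ω
      rcases hWval ω with h0 | h1
      · simp [Set.indicator, Set.mem_preimage, h0]
      · simp [Set.indicator, Set.mem_preimage, h1]
    rw [hWeq, integral_indicator (hWm (measurableSet_singleton 1)), setIntegral_const,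
      smul_eq_mul, mul_one]
    exact hp
  -- independence consequences
  have hindW : IndepFun (fun ω => Z ω j) W P :=
    (hWXZ.comp measurable_id ((measurable_pi_apply j).comp measurable_snd)).symm
  have hindE : IndepFun (fun ω => Z ω j) eps P :=
    (hepsXZ.comp measurable_id ((measurable_pi_apply j).comp measurable_snd)).symm
  have hEZW : ∫ ω, Z ω j * W ω ∂P = (∫ ω, Z ω j ∂P) * p := by
    rw [hindW.integral_fun_mul_eq_mul_integral hZjm.aestronglyMeasurable hWm.aestronglyMeasurable, hWp]
  have hEZeps : ∫ ω, Z ω j * eps ω ∂P = 0 := by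
    rw [hindE.integral_fun_mul_eq_mul_integral hZjm.aestronglyMeasurable hepsm.aestronglyMeasurable, heps0,
      mul_zero]
  -- integral of conditional expectations
  have hcEint : ∫ ω, cE ω ∂P = ∫ ω, h (Z ω) ∂P := by
    rw [hcE]; exact integral_condExp hm
  -- E[R] = 0
  have hRint : ∫ ω, R ω ∂P = 0 := by
    have e1 : Integrable (fun ω => h (Z ω) - cE ω) P := inthZ.sub intcE
    have e2 : Integrable (fun ω => τ * (W ω - p)) P :=
      (intW.sub (integrable_const p)).const_mul τ
    have e3 : Integrable (fun ω => h (Z ω) - cE ω + τ * (W ω - p)) P := e1.add e2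
    have hstep : ∫ ω, R ω ∂P
        = ∫ ω, (h (Z ω) - cE ω + τ * (W ω - p) + eps ω) ∂P :=
      integral_congr_ae (Filter.Eventually.of_forall fun ω => hR ω)
    rw [hstep, integral_add e3 inteps, integral_add e1 e2,
      integral_sub inthZ intcE, integral_const_mul, integral_sub intW (integrable_const p),
      hcEint, hWp, heps0, integral_const]
    simp
  -- pull-out property
  have hpull : ∫ ω, Z ω j * cE ω ∂P = ∫ ω, cZj ω * cE ω ∂P := by
    have hmulint : Integrable (cE * fun ω => Z ω j) P := by
      have := myIntMul hcE2 (hZ2 j); exact this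
    have hce : P[(cE * fun ω => Z ω j) | MeasurableSpace.comap X inferInstance]
        =ᵐ[P] cE * cZj := by
      rw [hcZj]
      exact condExp_mul_of_stronglyMeasurable_left (hcE ▸ stronglyMeasurable_condExp) hmulint intZj
    calc ∫ ω, Z ω j * cE ω ∂P = ∫ ω, (cE * fun ω => Z ω j) ω ∂P := by
          refine integral_congr_ae (Filter.Eventually.of_forall fun ω => ?_)
          simp [mul_comm]
      _ = ∫ ω, (P[(cE * fun ω => Z ω j) | MeasurableSpace.comap X inferInstance]) ω ∂P :=
          (integral_condExp hm).symm
      _ = ∫ ω, (cE * cZj) ω ∂P := integral_congr_ae hce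
      _ = ∫ ω, cZj ω * cE ω ∂P := by
          refine integral_congr_ae (Filter.Eventually.of_forall fun ω => ?_)
          simp [mul_comm]
  -- split E[Z_j R]
  have hZR : ∫ ω, Z ω j * R ω ∂P
      = ∫ ω, Z ω j * h (Z ω) ∂P - ∫ ω, Z ω j * cE ω ∂P := by
    have f1 : Integrable (fun ω => Z ω j * h (Z ω) - Z ω j * cE ω) P := int1.sub int2
    have f2 : Integrable (fun ω => Z ω j * W ω - p * Z ω j) P := int3.sub (intZj.const_mul p)
    have f3 : Integrable (fun ω => τ * (Z ω j * W ω - p * Z ω j)) P := f2.const_mul τ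
    have f4 : Integrable (fun ω => Z ω j * h (Z ω) - Z ω j * cE ω
        + τ * (Z ω j * W ω - p * Z ω j)) P := f1.add f3
    have hstep : ∫ ω, Z ω j * R ω ∂P
        = ∫ ω, (Z ω j * h (Z ω) - Z ω j * cE ω
            + τ * (Z ω j * W ω - p * Z ω j) + Z ω j * eps ω) ∂P :=
      integral_congr_ae (Filter.Eventually.of_forall fun ω => by simp only [hR]; ring)
    rw [hstep, integral_add f4 int4, integral_add f1 f3,
      integral_sub int1 int2, integral_const_mul,
      integral_sub int3 (intZj.const_mul p), integral_const_mul, hEZW, hEZeps]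
    ring
  -- conclude
  have hRHS : ∫ ω, ((P[(fun ω' => Z ω' j * h (Z ω')) | MeasurableSpace.comap X inferInstance]) ω
        - cZj ω * cE ω) ∂P
      = ∫ ω, Z ω j * h (Z ω) ∂P - ∫ ω, cZj ω * cE ω ∂P := by
    rw [integral_sub integrable_condExp int5, integral_condExp hm]
  rw [hZR, hRint, mul_zero, sub_zero, hpull, hRHS]
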